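/- The function f(x) = x^p for p ≥ 2 is superquadratic on [0,∞), with witness C(x) = p·x^(p-1). -/

import Mathlib

open Real

private lemma rpow_superadd {a b q : ℝ} (ha : 0 ≤ a) (hb : 0 ≤ b) (hq : 1 ≤ q) :
    a ^ q + b ^ q ≤ (a + b) ^ q := by
  have key : ∀ c : ℝ, 0 ≤ c → c ≤ a + b → c ^ q ≤ (a + b) ^ (q - 1) * c := by
    intro c hc hcab
    rcases eq_or_lt_of_le hc with h | h
    · rw [← h, Real.zero_rpow (by linarith : q ≠ 0), mul_zero]
    · have hcq : c ^ q = c ^ (q - 1) * c := by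
        rw [← Real.rpow_add_one (ne_of_gt h), sub_add_cancel]
      rw [hcq]
      exact mul_le_mul_of_nonneg_right
        (Real.rpow_le_rpow (le_of_lt h) hcab (by linarith)) hc
  calc a ^ q + b ^ q ≤ (a + b) ^ (q - 1) * a + (a + b) ^ (q - 1) * b := by
        gcongr <;> [exact key a ha (by linarith); exact key b hb (by linarith)]
    _ = (a + b) ^ (q - 1) * (a + b) := by ring
    _ = (a + b) ^ q := by
        rcases eq_or_lt_of_le (add_nonneg ha hb) with h | h
        · rw [← h]; simp [Real.zero_rpow (by linarith : q ≠ 0)]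
        · rw [← Real.rpow_add_one (ne_of_gt h), sub_add_cancel]

private lemma hasDerivAt_shift (x : ℝ) {p : ℝ} (hp : 1 ≤ p) (y : ℝ) :
    HasDerivAt (fun y : ℝ => (y - x) ^ p) (p * (y - x) ^ (p - 1)) y := by
  have h := (Real.hasDerivAt_rpow_const (x := y - x) (p := p) (Or.inr hp)).comp y
    ((hasDerivAt_id y).sub_const x)
  simpa [Function.comp_def] using h

theorem rpow_superquadratic (p : ℝ) (hp : 2 ≤ p) :
    ∀ x ≥ (0:ℝ), ∀ y ≥ (0:ℝ),
      y ^ p - x ^ p ≥ |y - x| ^ p + (p * x ^ (p - 1)) * (y - x) := by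
  have hp1 : (1:ℝ) ≤ p := by linarith
  have hp1' : (1:ℝ) ≤ p - 1 := by linarith
  intro x hx y hy
  set c : ℝ := p * x ^ (p - 1) with hc
  rcases le_total x y with hxy | hxy
  -- case y ≥ x
  · rw [abs_of_nonneg (by linarith)]
    -- g₁ t = t^p - (t-x)^p - c*t is monotone on [x, ∞)
    set g : ℝ → ℝ := fun t => t ^ p - (t - x) ^ p - c * t with hg
    have hderiv : ∀ t : ℝ, HasDerivAt g (p * t ^ (p - 1) - p * (t - x) ^ (p - 1) - c) t := by
      intro t
      exact (((Real.hasDerivAt_rpow_const (Or.inr hp1)).sub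
        (hasDerivAt_shift x hp1 t)).sub ((hasDerivAt_id t).const_mul c))|>.congr_deriv (by ring)
    have hmono : MonotoneOn g (Set.Ici x) := by
      apply monotoneOn_of_deriv_nonneg (convex_Ici x)
      · exact (Differentiable.continuous fun t => (hderiv t).differentiableAt).continuousOn
      · intro t _; exact (hderiv t).differentiableAt.differentiableWithinAt
      · intro t ht
        rw [interior_Ici] at ht
        rw [(hderiv t).deriv]
        have h1 : x ^ (p - 1) + (t - x) ^ (p - 1) ≤ t ^ (p - 1) := by
          have := rpow_superadd hx (by simp at ht; linarith : (0:ℝ) ≤ t - x) hp1'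
          simpa using this
        have hp0 : (0:ℝ) < p := by linarith
        rw [hc]; nlinarith
    have := hmono (Set.self_mem_Ici) (Set.mem_Ici.mpr hxy) hxy
    have hgx : g x = x ^ p - c * x := by
      simp [hg, Real.zero_rpow (by linarith : p ≠ 0)]
    rw [hgx, hg] at this
    simp only at this
    linarith
  -- case y ≤ x
  · rw [abs_of_nonpos (by linarith), neg_sub]
    set g : ℝ → ℝ := fun t => t ^ p - (x - t) ^ p - c * t with hg
    have hderiv : ∀ t : ℝ, HasDerivAt g (p * t ^ (p - 1) + p * (x - t) ^ (p - 1) - c) t := by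
      intro t
      have h2 : HasDerivAt (fun t : ℝ => (x - t) ^ p) (-(p * (x - t) ^ (p - 1))) t := by
        have h := (Real.hasDerivAt_rpow_const (x := x - t) (p := p) (Or.inr hp1)).comp t
          ((hasDerivAt_id t).const_sub x)
        simpa [Function.comp_def] using h
      exact (((Real.hasDerivAt_rpow_const (Or.inr hp1)).sub h2).sub
        ((hasDerivAt_id t).const_mul c)).congr_deriv (by ring)
    have hanti : AntitoneOn g (Set.Icc 0 x) := by
      apply antitoneOn_of_deriv_nonpos (convex_Icc 0 x)
      · exact (Differentiable.continuous fun t => (hderiv t).differentiableAt).continuousOn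
      · intro t _; exact (hderiv t).differentiableAt.differentiableWithinAt
      · intro t ht
        rw [interior_Icc] at ht
        obtain ⟨ht0, htx⟩ := ht
        rw [(hderiv t).deriv]
        have h1 : t ^ (p - 1) + (x - t) ^ (p - 1) ≤ x ^ (p - 1) := by
          have := rpow_superadd (le_of_lt ht0) (by linarith : (0:ℝ) ≤ x - t) hp1'
          simpa using this
        have hp0 : (0:ℝ) < p := by linarith
        rw [hc]; nlinarith
    have := hanti (Set.mem_Icc.mpr ⟨hy, hxy⟩) (Set.mem_Icc.mpr ⟨hx, le_refl x⟩) hxy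
    have hgx : g x = x ^ p - c * x := by
      simp [hg, Real.zero_rpow (by linarith : p ≠ 0)]
    rw [hgx, hg] at this
    simp only at this
    linarith
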